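/- Let $Q^n = [0,1]^n$ be the unit cube and let $X_1, \ldots, X_N$ be closed subsets covering $Q^n$ such that no point of $Q^n$ lies in more than $n$ of them. Then some $X_i$ intersects two opposite facets of $Q^n$, i.e., there exist $i$ and a coordinate $j$ such that $X_i$ meets both $\{x \in Q^n : x_j = 0\}$ and $\{x \in Q^n : x_j = 1\}$. -/

import Mathlib

open Finset Set Filter Topology Metric MeasureTheory

namespace KuhnCL

/-- abstract per-simplex door counting -/
lemma fiber_parity (N : ℕ) (ℓ : ℕ → ℕ) (hℓ : ∀ r < N + 1, ℓ r ≤ N) :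
    ((Finset.range (N+1)).filter fun t => ∀ m < N, ∃ r < N+1, r ≠ t ∧ ℓ r = m).card % 2
    = if (∀ m < N + 1, ∃ r < N+1, ℓ r = m) then 1 else 0 := by
  classical
  set I : Finset ℕ := Finset.range (N+1) with hI
  by_cases hall : ∀ m < N, ∃ r < N+1, ℓ r = m
  · by_cases htop : ∃ r < N+1, ℓ r = N
    · -- complete case: filter = {r0}
      obtain ⟨r0, hr0, hr0N⟩ := htop
      have hcomp : ∀ m < N + 1, ∃ r < N+1, ℓ r = m := by
        intro m hm
        rcases Nat.lt_succ_iff_lt_or_eq.mp hm with h | h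
        · exact hall m h
        · exact ⟨r0, hr0, h ▸ hr0N⟩
      rw [if_pos hcomp]
      have himg : I.image ℓ = Finset.range (N+1) := by
        apply Finset.Subset.antisymm
        · intro m hm
          obtain ⟨r, hr, rfl⟩ := Finset.mem_image.mp hm
          have hr' : r < N+1 := by simpa [hI] using hr
          exact Finset.mem_range.mpr (Nat.lt_succ_of_le (hℓ r hr'))
        · intro m hm
          simp only [Finset.mem_range] at hm
          obtain ⟨r, hr, hrm⟩ := hcomp m hm
          exact Finset.mem_image.mpr ⟨r, by simpa [hI] using hr, hrm⟩
      have hinj : Set.InjOn ℓ I := by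
        apply Finset.injOn_of_card_image_eq
        rw [himg]
      have : (I.filter fun t => ∀ m < N, ∃ r < N+1, r ≠ t ∧ ℓ r = m) = {r0} := by
        apply Finset.Subset.antisymm
        · intro t ht
          simp only [Finset.mem_filter] at ht
          simp only [Finset.mem_singleton]
          by_contra htr0
          -- t ≠ r0 : then erase t covers range (N+1), contradiction on cards
          obtain ⟨ht1, ht2⟩ := ht
          have hsub : Finset.range (N+1) ⊆ (I.erase t).image ℓ := by
            intro m hm
            simp only [Finset.mem_range] at hm
            rcases Nat.lt_succ_iff_lt_or_eq.mp hm with h | h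
            · obtain ⟨r, hr, hrt, hrm⟩ := ht2 m h
              exact Finset.mem_image.mpr ⟨r, Finset.mem_erase.mpr ⟨hrt, by simpa [hI] using hr⟩, hrm⟩
            · subst h
              exact Finset.mem_image.mpr ⟨r0, Finset.mem_erase.mpr
                ⟨fun h => htr0 h.symm, by simpa [hI] using hr0⟩, hr0N⟩
          have h1 : N + 1 ≤ ((I.erase t).image ℓ).card := by
            calc N + 1 = (Finset.range (N+1)).card := by simp
            _ ≤ _ := Finset.card_le_card hsub
          have h2 : ((I.erase t).image ℓ).card ≤ N := by
            calc ((I.erase t).image ℓ).card ≤ (I.erase t).card := Finset.card_image_le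
            _ = N := by rw [Finset.card_erase_of_mem ht1]; simp [hI]
          omega
        · intro t ht
          simp only [Finset.mem_singleton] at ht
          subst ht
          simp only [Finset.mem_filter]
          refine ⟨by simpa [hI] using hr0, fun m hm => ?_⟩
          obtain ⟨r, hr, hrm⟩ := hall m hm
          refine ⟨r, hr, fun hrr0 => ?_, hrm⟩
          subst hrr0
          omega
      rw [this]; simp
    · -- N missing, all m < N present: two doors
      rw [if_neg (by push_neg; exact ⟨N, by omega, by push_neg at htop; intro r hr; exact fun h => htop r hr h⟩)]
      push_neg at htop
      have himg : I.image ℓ ⊆ Finset.range N := by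
        intro m hm
        simp only [Finset.mem_image, hI, Finset.mem_range] at hm ⊢
        obtain ⟨r, hr, rfl⟩ := hm
        have := hℓ r hr
        have := htop r hr
        omega
      obtain ⟨t1, ht1, t2, ht2, hne, heq⟩ :
          ∃ x ∈ I, ∃ y ∈ I, x ≠ y ∧ ℓ x = ℓ y := by
        apply Finset.exists_ne_map_eq_of_card_lt_of_maps_to (t := Finset.range N)
        · simp [hI]
        · intro a ha; exact himg (Finset.mem_image_of_mem ℓ ha)
      have hfil : (I.filter fun t => ∀ m < N, ∃ r < N+1, r ≠ t ∧ ℓ r = m) = {t1, t2} := by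
        apply Finset.Subset.antisymm
        · intro t ht
          simp only [Finset.mem_filter] at ht
          obtain ⟨htI, htA⟩ := ht
          simp only [Finset.mem_insert, Finset.mem_singleton]
          by_contra hcon
          push_neg at hcon
          -- injectivity on erase t
          have hsub : Finset.range N ⊆ (I.erase t).image ℓ := by
            intro m hm
            simp only [Finset.mem_range] at hm
            obtain ⟨r, hr, hrt, hrm⟩ := htA m hm
            exact Finset.mem_image.mpr ⟨r, Finset.mem_erase.mpr ⟨hrt, by simpa [hI] using hr⟩, hrm⟩
          have himg2 : (I.erase t).image ℓ = Finset.range N := by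
            apply Finset.Subset.antisymm _ hsub
            exact fun m hm => himg (Finset.image_subset_image (Finset.erase_subset t I) hm)
          have hinj : Set.InjOn ℓ (I.erase t) := by
            apply Finset.injOn_of_card_image_eq
            rw [himg2]
            rw [Finset.card_erase_of_mem htI]
            simp [hI]
          have ht1' : t1 ∈ I.erase t := Finset.mem_erase.mpr ⟨fun h => hcon.1 (by rw [h]), ht1⟩
          have ht2' : t2 ∈ I.erase t := Finset.mem_erase.mpr ⟨fun h => hcon.2 (by rw [h]), ht2⟩
          exact hne (hinj ht1' ht2' heq)
        · intro t ht
          simp only [Finset.mem_insert, Finset.mem_singleton] at ht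
          have key : ∀ t ∈ I, ∀ t' ∈ I, t ≠ t' → ℓ t = ℓ t' →
              (∀ m < N, ∃ r < N+1, r ≠ t ∧ ℓ r = m) := by
            intro t htI t' ht'I htt' hℓtt' m hm
            obtain ⟨r, hr, hrm⟩ := hall m hm
            by_cases hrt : r = t
            · exact ⟨t', by simpa [hI] using ht'I, Ne.symm htt', by
                rw [← hℓtt', ← hrt, hrm]⟩
            · exact ⟨r, hr, hrt, hrm⟩
          rcases ht with h | h
          · rw [h]; exact Finset.mem_filter.mpr ⟨ht1, key t1 ht1 t2 ht2 hne heq⟩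
          · rw [h]; exact Finset.mem_filter.mpr ⟨ht2, key t2 ht2 t1 ht1 (Ne.symm hne) heq.symm⟩
      rw [hfil, Finset.card_insert_of_notMem (by simpa using hne), Finset.card_singleton]
  · -- some m < N missing : no doors, not complete
    push_neg at hall
    obtain ⟨m0, hm0, hmiss⟩ := hall
    rw [if_neg (by push_neg; exact ⟨m0, by omega, fun r hr h => hmiss r hr h⟩)]
    convert Nat.zero_mod 2
    rw [Finset.card_eq_zero]
    apply Finset.filter_false_of_mem
    intro t _ hA
    obtain ⟨r, hr, _, hrm⟩ := hA m0 hm0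
    exact hmiss r hr hrm


variable (k : ℕ)

/-- `t`-th vertex of the Kuhn simplex `(b, π)`. -/
def vert {d : ℕ} (s : (Fin d → ℕ) × Equiv.Perm (Fin d)) (t : ℕ) : Fin d → ℕ :=
  fun j => s.1 j + if ((s.2)⁻¹ j).val < t then 1 else 0

def Simplices (d : ℕ) : Finset ((Fin d → ℕ) × Equiv.Perm (Fin d)) :=
  (Fintype.piFinset fun _ => Finset.range k) ×ˢ Finset.univ

def isDoor {d : ℕ} (κ : (Fin d → ℕ) → ℕ) (a : ((Fin d → ℕ) × Equiv.Perm (Fin d)) × ℕ) : Prop :=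
  ∀ m < d, ∃ r < d + 1, r ≠ a.2 ∧ κ (vert a.1 r) = m

def isComplete {d : ℕ} (κ : (Fin d → ℕ) → ℕ) (s : (Fin d → ℕ) × Equiv.Perm (Fin d)) : Prop :=
  ∀ m < d + 1, ∃ r < d + 1, κ (vert s r) = m

noncomputable def Doors (d : ℕ) (κ : (Fin d → ℕ) → ℕ) :
    Finset (((Fin d → ℕ) × Equiv.Perm (Fin d)) × ℕ) := by
  classical exact (Simplices k d ×ˢ Finset.range (d + 1)).filter (isDoor κ)

noncomputable def CompleteS (d : ℕ) (κ : (Fin d → ℕ) → ℕ) :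
    Finset ((Fin d → ℕ) × Equiv.Perm (Fin d)) := by
  classical exact (Simplices k d).filter (isComplete κ)

/-- extend a permutation of `Fin n` to `Fin (n+1)` fixing the last element -/
def extPerm {n : ℕ} (π : Equiv.Perm (Fin n)) : Equiv.Perm (Fin (n + 1)) where
  toFun := Fin.lastCases (Fin.last n) (fun i => (π i).castSucc)
  invFun := Fin.lastCases (Fin.last n) (fun i => (π⁻¹ i).castSucc)
  left_inv := by
    intro i
    cases i using Fin.lastCases with
    | last => simp
    | cast i => simp
  right_inv := by
    intro i
    cases i using Fin.lastCases with
    | last => simp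
    | cast i => simp

@[simp] lemma extPerm_last {n : ℕ} (π : Equiv.Perm (Fin n)) :
    extPerm π (Fin.last n) = Fin.last n := by simp [extPerm]

@[simp] lemma extPerm_castSucc {n : ℕ} (π : Equiv.Perm (Fin n)) (i : Fin n) :
    extPerm π i.castSucc = (π i).castSucc := by simp [extPerm]

@[simp] lemma extPerm_inv {n : ℕ} (π : Equiv.Perm (Fin n)) :
    (extPerm π)⁻¹ = extPerm π⁻¹ := by
  apply Equiv.ext
  intro i
  cases i using Fin.lastCases with
  | last => simp [extPerm, Equiv.Perm.inv_def]
  | cast i => simp [extPerm, Equiv.Perm.inv_def]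

lemma extPerm_injective {n : ℕ} : Function.Injective (extPerm (n := n)) := by
  intro π1 π2 h
  apply Equiv.ext
  intro i
  have := congrArg (fun e => (e : Equiv.Perm (Fin (n+1))) i.castSucc) h
  simpa [Fin.castSucc_inj] using this

lemma finRotate_inv_apply {n : ℕ} (j : Fin (n + 1)) :
    (finRotate (n + 1))⁻¹ j = j - 1 := by
  rw [Equiv.Perm.inv_def, Equiv.symm_apply_eq, finRotate_succ_apply, sub_add_cancel]

/-- vertex formula for the "rotate up" pivot (t = 0 case) -/
lemma vert_rotate_up {n : ℕ} (b : Fin (n + 1) → ℕ) (π : Equiv.Perm (Fin (n + 1)))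
    (r : ℕ) (hr : r ≤ n) :
    vert (fun j => b j + if j = π 0 then 1 else 0, π * finRotate (n + 1)) r
      = vert (b, π) (r + 1) := by
  funext j
  simp only [vert, mul_inv_rev, Equiv.Perm.mul_apply, finRotate_inv_apply]
  by_cases hj : j = π 0
  · have h1 : π⁻¹ j = 0 := by rw [hj]; simp
    rw [if_pos hj, h1]
    have h2 : ((0 : Fin (n+1)) - 1).val = n := by
      rw [Fin.coe_sub_one, if_pos rfl]
    rw [h2, Fin.val_zero]
    split_ifs <;> omega
  · have h1 : π⁻¹ j ≠ 0 := by
      intro h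
      exact hj (by rw [← h]; simp)
    rw [if_neg hj]
    have h2 : ((π⁻¹ j) - 1).val = (π⁻¹ j).val - 1 := by
      rw [Fin.coe_sub_one, if_neg h1]
    rw [h2]
    have h3 : 1 ≤ (π⁻¹ j).val := by
      rcases Nat.eq_zero_or_pos (π⁻¹ j).val with h | h
      · exact absurd (Fin.ext h) h1
      · exact h
    split_ifs <;> omega

/-- vertex formula for the "rotate down" pivot (t = top case) -/
lemma vert_rotate_down {n : ℕ} (b : Fin (n + 1) → ℕ) (π : Equiv.Perm (Fin (n + 1)))
    (hb : 1 ≤ b (π (Fin.last n))) (r : ℕ) (hr1 : 1 ≤ r) (hr2 : r ≤ n + 1) :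
    vert (fun j => b j - if j = π (Fin.last n) then 1 else 0, π * (finRotate (n + 1))⁻¹) r
      = vert (b, π) (r - 1) := by
  funext j
  simp only [vert, mul_inv_rev, inv_inv, Equiv.Perm.mul_apply, finRotate_succ_apply]
  by_cases hj : j = π (Fin.last n)
  · have h1 : π⁻¹ j = Fin.last n := by rw [hj]; simp
    rw [if_pos hj, h1]
    have h2 : ((Fin.last n) + 1 : Fin (n+1)).val = 0 := by
      simp [Fin.last, Fin.add_def]
    rw [h2, Fin.val_last]
    have hbj : 1 ≤ b j := by rw [hj]; exact hb
    split_ifs <;> omega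
  · have h1 : π⁻¹ j ≠ Fin.last n := by
      intro h
      exact hj (by rw [← h]; simp)
    rw [if_neg hj]
    have h3 : (π⁻¹ j).val < n := by
      have h5 := (π⁻¹ j).isLt
      have h6 : (π⁻¹ j).val ≠ n := fun h => h1 (Fin.ext (by rw [Fin.val_last]; exact h))
      omega
    have h2 : ((π⁻¹ j) + 1 : Fin (n+1)).val = (π⁻¹ j).val + 1 :=
      Fin.val_add_one_of_lt (by rw [Fin.lt_def, Fin.val_last]; exact h3)
    rw [h2]
    split_ifs <;> omega

/-- vertex formula for the "swap" pivot (middle case): vertices other than `t` agree -/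
lemma vert_swap {n : ℕ} (b : Fin (n + 1) → ℕ) (π : Equiv.Perm (Fin (n + 1)))
    (t1 t2 : Fin (n + 1)) (ht : (t1 : ℕ) + 1 = (t2 : ℕ)) (r : ℕ) (hr : r ≠ (t2 : ℕ)) :
    vert (b, π * Equiv.swap t1 t2) r = vert (b, π) r := by
  funext j
  simp only [vert, mul_inv_rev, Equiv.Perm.mul_apply, Equiv.swap_inv]
  congr 1
  by_cases h1 : π⁻¹ j = t1
  · rw [h1, Equiv.swap_apply_left]
    split_ifs <;> omega
  · by_cases h2 : π⁻¹ j = t2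
    · rw [h2, Equiv.swap_apply_right]
      split_ifs <;> omega
    · rw [Equiv.swap_apply_of_ne_of_ne h1 h2]

/-- vertices of the extended simplex -/
lemma vert_snoc {n : ℕ} (b : Fin n → ℕ) (π : Equiv.Perm (Fin n)) (r : ℕ) (hr : r ≤ n) :
    vert (Fin.snoc b 0, extPerm π) r = Fin.snoc (vert (b, π) r) 0 := by
  funext j
  cases j using Fin.lastCases with
  | last =>
    simp only [vert, extPerm_inv]
    have h1 : (extPerm π⁻¹) (Fin.last n) = Fin.last n := extPerm_last _
    have h2 : (extPerm π)⁻¹ (Fin.last n) = Fin.last n := by rw [extPerm_inv]; exact extPerm_last _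
    rw [Fin.snoc_last]
    have : ¬ ((extPerm π⁻¹ (Fin.last n)).val < r) := by
      rw [h1, Fin.val_last]; omega
    rw [if_neg this, Fin.snoc_last]
  | cast i =>
    simp only [vert, extPerm_inv]
    rw [Fin.snoc_castSucc, Fin.snoc_castSucc]
    have h1 : (extPerm π⁻¹) i.castSucc = (π⁻¹ i).castSucc := extPerm_castSucc _ _
    rw [h1]
    simp [vert, Fin.coe_castSucc]

section Step
variable {k n : ℕ} {κ : (Fin (n + 1) → ℕ) → ℕ}

lemma mem_Doors {a : ((Fin (n+1) → ℕ) × Equiv.Perm (Fin (n+1))) × ℕ} :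
    a ∈ Doors k (n+1) κ ↔ (∀ j, a.1.1 j < k) ∧ a.2 < n + 2 ∧ isDoor κ a := by
  classical
  simp only [Doors, Simplices, Finset.mem_filter, Finset.mem_product, Fintype.mem_piFinset,
    Finset.mem_range, Finset.mem_univ, and_true]
  tauto

lemma door_zero_bound (hS1 : ∀ x (j : Fin (n+1)), x j = k → κ x ≠ j.val)
    {b : Fin (n+1) → ℕ} {π : Equiv.Perm (Fin (n+1))} (hb : ∀ j, b j < k)
    (hdoor : isDoor κ ((b, π), 0)) : b (π 0) + 1 < k := by
  have hbk : b (π 0) + 1 ≤ k := hb _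
  rcases Nat.lt_or_ge (b (π 0) + 1) k with h | h
  · exact h
  · exfalso
    have hb0 : b (π 0) + 1 = k := by omega
    obtain ⟨r, hr, hr0, hrκ⟩ := hdoor (π 0).val (π 0).isLt
    have hr0' : r ≠ 0 := hr0
    have hrκ' : κ (vert (b, π) r) = (π 0).val := hrκ
    have hv : vert (b, π) r (π 0) = k := by
      simp only [vert]
      rw [Equiv.Perm.coe_inv, Equiv.symm_apply_apply]
      rw [if_pos (by rw [Fin.val_zero]; omega)]
      exact hb0
    exact hS1 _ (π 0) hv hrκ'

lemma door_top_boundary (hS0 : ∀ x (j : Fin (n+1)), x j = 0 → κ x ≤ j.val)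
    {b : Fin (n+1) → ℕ} {π : Equiv.Perm (Fin (n+1))} (hb0 : b (π (Fin.last n)) = 0)
    (hdoor : isDoor κ ((b, π), n + 1)) :
    π (Fin.last n) = Fin.last n ∧ b (Fin.last n) = 0 := by
  obtain ⟨r, hr, hrt, hrκ⟩ := hdoor n (by omega)
  have hrt' : r ≠ n + 1 := hrt
  have hrκ' : κ (vert (b, π) r) = n := hrκ
  have hrn : r ≤ n := by omega
  have hv : vert (b, π) r (π (Fin.last n)) = 0 := by
    simp only [vert]
    rw [Equiv.Perm.coe_inv, Equiv.symm_apply_apply, Fin.val_last]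
    rw [if_neg (by omega)]
    simpa using hb0
  have h1 : (n : ℕ) ≤ (π (Fin.last n)).val := by
    have := hS0 _ (π (Fin.last n)) hv
    rw [hrκ'] at this
    exact this
  have h2 : (π (Fin.last n)).val < n + 1 := (π (Fin.last n)).isLt
  have h3 : π (Fin.last n) = Fin.last n := Fin.ext (by rw [Fin.val_last]; omega)
  exact ⟨h3, by rw [← h3]; exact hb0⟩

/-- the pivot map on doors -/
noncomputable def pivot (a : ((Fin (n+1) → ℕ) × Equiv.Perm (Fin (n+1))) × ℕ) :
    ((Fin (n+1) → ℕ) × Equiv.Perm (Fin (n+1))) × ℕ :=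
  if a.2 = 0 then
    ((fun j => a.1.1 j + if j = a.1.2 0 then 1 else 0, a.1.2 * finRotate (n+1)), n+1)
  else if a.2 = n+1 then
    ((fun j => a.1.1 j - if j = a.1.2 (Fin.last n) then 1 else 0, a.1.2 * (finRotate (n+1))⁻¹), 0)
  else
    ((a.1.1, a.1.2 * Equiv.swap ⟨(a.2-1) % (n+1), Nat.mod_lt _ (Nat.succ_pos n)⟩
        ⟨a.2 % (n+1), Nat.mod_lt _ (Nat.succ_pos n)⟩), a.2)

/-- boundary doors -/
noncomputable def BD (k n : ℕ) (κ : (Fin (n + 1) → ℕ) → ℕ) :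
    Finset (((Fin (n+1) → ℕ) × Equiv.Perm (Fin (n+1))) × ℕ) := by
  classical
  exact (Doors k (n+1) κ).filter (fun a => a.2 = n+1 ∧ a.1.1 (a.1.2 (Fin.last n)) = 0)

lemma pivot_spec (hS0 : ∀ x (j : Fin (n+1)), x j = 0 → κ x ≤ j.val)
    (hS1 : ∀ x (j : Fin (n+1)), x j = k → κ x ≠ j.val)
    {a : ((Fin (n+1) → ℕ) × Equiv.Perm (Fin (n+1))) × ℕ}
    (ha : a ∈ Doors k (n+1) κ \ BD k n κ) :
    pivot a ∈ Doors k (n+1) κ \ BD k n κ ∧ pivot (pivot a) = a ∧ pivot a ≠ a := by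
  classical
  obtain ⟨⟨⟨b, π⟩, t⟩, rfl⟩ : ∃ p : ((Fin (n+1) → ℕ) × Equiv.Perm (Fin (n+1))) × ℕ, p = a :=
    ⟨a, rfl⟩
  rw [Finset.mem_sdiff] at ha
  obtain ⟨haD, haB⟩ := ha
  have haD' := haD
  rw [mem_Doors] at haD
  obtain ⟨hb, htlt, hdoor⟩ := haD
  simp only at hb htlt
  rw [BD, Finset.mem_filter, not_and] at haB
  by_cases ht0 : t = 0
  · -- pivot up
    subst ht0
    have hbound := door_zero_bound hS1 hb hdoor
    have hpiv : pivot ((b, π), 0) =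
        ((fun j => b j + if j = π 0 then 1 else 0, π * finRotate (n+1)), n+1) := by
      simp [pivot]
    have hπ'last : (π * finRotate (n+1)) (Fin.last n) = π 0 := by
      rw [Equiv.Perm.mul_apply, finRotate_succ_apply, Fin.last_add_one]
    have hDoor2 : isDoor κ ((fun j => b j + if j = π 0 then 1 else 0,
        π * finRotate (n+1)), n+1) := by
      intro m hm
      obtain ⟨r, hr, hr0, hrκ⟩ := hdoor m hm
      have hr0' : r ≠ 0 := hr0
      have hrκ' : κ (vert (b, π) r) = m := hrκ
      refine ⟨r - 1, by omega, by omega, ?_⟩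
      rw [vert_rotate_up b π (r-1) (by omega)]
      have : r - 1 + 1 = r := by omega
      rw [this]
      exact hrκ'
    have hmem : pivot ((b, π), 0) ∈ Doors k (n+1) κ \ BD k n κ := by
      rw [hpiv, Finset.mem_sdiff, mem_Doors]
      refine ⟨⟨?_, by omega, hDoor2⟩, ?_⟩
      · intro j
        show b j + (if j = π 0 then 1 else 0) < k
        have := hb j
        split_ifs with hj
        · rw [hj]; omega
        · omega
      · rw [BD, Finset.mem_filter, not_and]
        intro _
        push_neg
        intro _
        show (fun j => b j + if j = π 0 then 1 else 0) ((π * finRotate (n+1)) (Fin.last n)) ≠ 0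
        rw [hπ'last]
        show b (π 0) + (if π 0 = π 0 then 1 else 0) ≠ 0
        rw [if_pos rfl]
        omega
    refine ⟨hpiv ▸ hmem, ?_, ?_⟩
    · rw [hpiv]
      have h2 : pivot ((fun j => b j + if j = π 0 then 1 else 0,
          π * finRotate (n+1)), n+1) =
          ((b, π), 0) := by
        rw [pivot]
        rw [if_neg (Nat.succ_ne_zero n), if_pos rfl]
        refine Prod.ext (Prod.ext ?_ ?_) rfl
        · funext j
          simp only [hπ'last]
          show b j + (if j = π 0 then 1 else 0) - (if j = π 0 then 1 else 0) = b j
          split_ifs <;> omega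
        · simp [mul_assoc]
      exact h2
    · rw [hpiv]
      intro h
      exact Nat.succ_ne_zero n (congrArg Prod.snd h)
  · by_cases htn : t = n + 1
    · -- pivot down
      subst htn
      have hb1 : 1 ≤ b (π (Fin.last n)) := by
        rcases Nat.eq_zero_or_pos (b (π (Fin.last n))) with h | h
        · exact absurd ⟨rfl, h⟩ (haB haD')
        · exact h
      have hpiv : pivot ((b, π), n+1) =
          ((fun j => b j - if j = π (Fin.last n) then 1 else 0,
            π * (finRotate (n+1))⁻¹), 0) := by
        rw [pivot]
        rw [if_neg (Nat.succ_ne_zero n), if_pos rfl]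
      have h01 : ((0 : Fin (n+1)) - 1) = Fin.last n := by
        apply Fin.ext
        rw [Fin.coe_sub_one, if_pos rfl, Fin.val_last]
      have hπ'0 : (π * (finRotate (n+1))⁻¹) 0 = π (Fin.last n) := by
        rw [Equiv.Perm.mul_apply, finRotate_inv_apply, h01]
      have hDoor2 : isDoor κ ((fun j => b j - if j = π (Fin.last n) then 1 else 0,
          π * (finRotate (n+1))⁻¹), 0) := by
        intro m hm
        obtain ⟨r, hr, hrt, hrκ⟩ := hdoor m hm
        have hrt' : r ≠ n + 1 := hrt
        have hrκ' : κ (vert (b, π) r) = m := hrκ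
        refine ⟨r + 1, by omega, by omega, ?_⟩
        rw [vert_rotate_down b π hb1 (r+1) (by omega) (by omega)]
        simpa using hrκ'
      have hmem : pivot ((b, π), n+1) ∈ Doors k (n+1) κ \ BD k n κ := by
        rw [hpiv, Finset.mem_sdiff, mem_Doors]
        refine ⟨⟨?_, by omega, hDoor2⟩, ?_⟩
        · intro j
          show b j - (if j = π (Fin.last n) then 1 else 0) < k
          have := hb j
          split_ifs <;> omega
        · rw [BD, Finset.mem_filter, not_and]
          intro _
          push_neg
          intro h
          exact absurd h.symm (Nat.succ_ne_zero n)
      refine ⟨hpiv ▸ hmem, ?_, ?_⟩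
      · rw [hpiv]
        have h2 : pivot ((fun j => b j - if j = π (Fin.last n) then 1 else 0,
            π * (finRotate (n+1))⁻¹), 0) = ((b, π), n+1) := by
          rw [pivot, if_pos rfl]
          refine Prod.ext (Prod.ext ?_ ?_) rfl
          · funext j
            simp only [hπ'0]
            show b j - (if j = π (Fin.last n) then 1 else 0)
                + (if j = π (Fin.last n) then 1 else 0) = b j
            split_ifs with hj
            · rw [hj]; omega
            · omega
          · simp [mul_assoc]
        exact h2
      · rw [hpiv]
        intro h
        exact Nat.succ_ne_zero n (congrArg Prod.snd h).symm
    · -- middle pivot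
      have ht1 : 1 ≤ t := by omega
      have ht2 : t < n + 1 := by omega
      set t1 : Fin (n+1) := ⟨(t-1) % (n+1), Nat.mod_lt _ (Nat.succ_pos n)⟩ with ht1def
      set t2 : Fin (n+1) := ⟨t % (n+1), Nat.mod_lt _ (Nat.succ_pos n)⟩ with ht2def
      have hv1 : (t1 : ℕ) = t - 1 := Nat.mod_eq_of_lt (by omega)
      have hv2 : (t2 : ℕ) = t := Nat.mod_eq_of_lt (by omega)
      have h12 : (t1 : ℕ) + 1 = (t2 : ℕ) := by omega
      have hpiv : pivot ((b, π), t) = ((b, π * Equiv.swap t1 t2), t) := by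
        rw [pivot, if_neg ht0, if_neg htn]
      have hDoor2 : isDoor κ ((b, π * Equiv.swap t1 t2), t) := by
        intro m hm
        obtain ⟨r, hr, hrt, hrκ⟩ := hdoor m hm
        have hrt' : r ≠ t := hrt
        have hrκ' : κ (vert (b, π) r) = m := hrκ
        refine ⟨r, hr, hrt', ?_⟩
        rw [vert_swap b π t1 t2 h12 r (by omega)]
        exact hrκ'
      have hmem : pivot ((b, π), t) ∈ Doors k (n+1) κ \ BD k n κ := by
        rw [hpiv, Finset.mem_sdiff, mem_Doors]
        refine ⟨⟨hb, by omega, hDoor2⟩, ?_⟩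
        rw [BD, Finset.mem_filter, not_and]
        intro _
        push_neg
        intro h
        exact absurd h htn
      refine ⟨hpiv ▸ hmem, ?_, ?_⟩
      · rw [hpiv]
        have h2 : pivot ((b, π * Equiv.swap t1 t2), t) = ((b, π), t) := by
          rw [pivot, if_neg ht0, if_neg htn]
          refine Prod.ext (Prod.ext rfl ?_) rfl
          show π * Equiv.swap t1 t2 * Equiv.swap t1 t2 = π
          rw [mul_assoc, Equiv.swap_mul_self, mul_one]
        exact h2
      · rw [hpiv]
        intro h
        have hππ : π * Equiv.swap t1 t2 = π := congrArg (fun x => x.1.2) h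
        have : Equiv.swap t1 t2 = 1 := by
          have := congrArg (fun x => π⁻¹ * x) hππ
          simpa [← mul_assoc] using this
        rw [Equiv.swap_eq_one_iff] at this
        have : (t1 : ℕ) = (t2 : ℕ) := congrArg Fin.val this
        omega


lemma doors_sdiff_even (hS0 : ∀ x (j : Fin (n+1)), x j = 0 → κ x ≤ j.val)
    (hS1 : ∀ x (j : Fin (n+1)), x j = k → κ x ≠ j.val) :
    (Doors k (n+1) κ \ BD k n κ).card % 2 = 0 := by
  classical
  have hsum : ∑ _a ∈ (Doors k (n+1) κ \ BD k n κ), (1 : ZMod 2) = 0 := by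
    apply Finset.sum_involution (fun a _ => pivot a)
    · intro a _; decide
    · intro a ha _; exact (pivot_spec hS0 hS1 ha).2.2
    · intro a ha; exact (pivot_spec hS0 hS1 ha).1
    · intro a ha; exact (pivot_spec hS0 hS1 ha).2.1
  rw [Finset.sum_const, nsmul_eq_mul, mul_one] at hsum
  have h2 := (ZMod.natCast_eq_zero_iff _ 2).mp hsum
  omega

lemma doors_card_parity (hκ : ∀ x, κ x ≤ n + 1) :
    (Doors k (n+1) κ).card % 2 = (CompleteS k (n+1) κ).card % 2 := by
  classical
  have hmap : ∀ a ∈ Doors k (n+1) κ, a.1 ∈ Simplices k (n+1) := by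
    intro a ha
    rw [Doors, Finset.mem_filter, Finset.mem_product] at ha
    exact ha.1.1
  rw [Finset.card_eq_sum_card_fiberwise hmap, CompleteS, Finset.card_filter,
    Finset.sum_nat_mod]
  conv_rhs => rw [Finset.sum_nat_mod]
  congr 1
  apply Finset.sum_congr rfl
  intro σ hσ
  have hcard : ((Doors k (n+1) κ).filter (fun a => a.1 = σ)).card
      = ((Finset.range (n+1+1)).filter
          fun t => ∀ m < n+1, ∃ r < n+1+1, r ≠ t ∧ κ (vert σ r) = m).card := by
    refine Finset.card_bij' (fun a _ => a.2) (fun t _ => (σ, t)) ?_ ?_ ?_ ?_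
    · intro a ha
      rw [Finset.mem_filter] at ha
      obtain ⟨haD, ha1⟩ := ha
      rw [mem_Doors] at haD
      rw [Finset.mem_filter, Finset.mem_range]
      refine ⟨haD.2.1, ?_⟩
      intro m hm
      obtain ⟨r, hr, hrt, hrκ⟩ := haD.2.2 m hm
      exact ⟨r, hr, hrt, by rw [← ha1]; exact hrκ⟩
    · intro t htm
      rw [Finset.mem_filter, Finset.mem_range] at htm
      rw [Finset.mem_filter, mem_Doors]
      have hσ' := hσ
      rw [Simplices, Finset.mem_product, Fintype.mem_piFinset] at hσ'
      refine ⟨⟨fun j => by simpa using hσ'.1 j, htm.1, ?_⟩, rfl⟩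
      intro m hm
      obtain ⟨r, hr, hrt, hrκ⟩ := htm.2 m hm
      exact ⟨r, hr, hrt, hrκ⟩
    · intro a ha
      rw [Finset.mem_filter] at ha
      exact Prod.ext ha.2.symm rfl
    · intro t ht
      rfl
  have hp' : ((Finset.range (n+1+1)).filter
        fun t => ∀ m < n+1, ∃ r < n+1+1, r ≠ t ∧ κ (vert σ r) = m).card % 2
      = if (∀ m < n+1+1, ∃ r < n+1+1, κ (vert σ r) = m) then 1 else 0 :=
    fiber_parity (n+1) (fun r => κ (vert σ r)) (fun r _ => hκ _)
  rw [hcard, hp']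
  by_cases hc : isComplete κ σ
  · rw [if_pos hc, if_pos (show (∀ m < n+1+1, ∃ r < n+1+1, κ (vert σ r) = m) from hc)]
  · rw [if_neg hc, if_neg (show ¬ (∀ m < n+1+1, ∃ r < n+1+1, κ (vert σ r) = m) from hc)]

lemma bd_card (hk : 0 < k) (hS0 : ∀ x (j : Fin (n+1)), x j = 0 → κ x ≤ j.val) :
    (CompleteS k n (fun y => κ (Fin.snoc y 0))).card = (BD k n κ).card := by
  classical
  set κ' : (Fin n → ℕ) → ℕ := fun y => κ (Fin.snoc y 0) with hκ'
  apply Finset.card_bij (i := fun s _ => ((Fin.snoc s.1 0, extPerm s.2), n+1))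
  · -- maps into BD
    intro s hs
    rw [CompleteS, Finset.mem_filter, Simplices, Finset.mem_product,
      Fintype.mem_piFinset] at hs
    obtain ⟨⟨hval, -⟩, hcomp⟩ := hs
    rw [BD, Finset.mem_filter]
    refine ⟨?_, rfl, ?_⟩
    · rw [mem_Doors]
      refine ⟨?_, by omega, ?_⟩
      · intro j
        cases j using Fin.lastCases with
        | last => simpa using hk
        | cast i => simpa using hval i
      · intro m hm
        obtain ⟨r, hr, hrκ⟩ := hcomp m (by omega)
        refine ⟨r, by omega, by omega, ?_⟩
        show κ (vert (Fin.snoc s.1 0, extPerm s.2) r) = m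
        rw [vert_snoc s.1 s.2 r (by omega)]
        exact hrκ
    · simp
  · -- injective
    intro s1 hs1 s2 hs2 heq
    simp only [Prod.mk.injEq] at heq
    obtain ⟨⟨hb, hπ⟩, -⟩ := heq
    have hb' : s1.1 = s2.1 := by
      funext i
      have := congrFun hb i.castSucc
      rwa [Fin.snoc_castSucc, Fin.snoc_castSucc] at this
    have hπ' : s1.2 = s2.2 := extPerm_injective hπ
    exact Prod.ext hb' hπ'
  · -- surjective
    intro a ha
    rw [BD, Finset.mem_filter] at ha
    obtain ⟨haD, hat, hab⟩ := ha
    have haD' := haD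
    rw [mem_Doors] at haD'
    obtain ⟨hval, htlt, hdoor⟩ := haD'
    obtain ⟨⟨b, π⟩, t⟩ := a
    simp only at hval hat hab ⊢
    subst hat
    have hdoor' : isDoor κ ((b, π), n+1) := hdoor
    have hbb : b (π (Fin.last n)) = 0 := hab
    obtain ⟨hπl, hbl⟩ := door_top_boundary hS0 hbb hdoor'
    have hπinvl : π⁻¹ (Fin.last n) = Fin.last n := by
      conv_lhs => rw [← hπl]
      rw [Equiv.Perm.coe_inv, Equiv.symm_apply_apply]
    have hne : ∀ i : Fin n, π i.castSucc ≠ Fin.last n := by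
      intro i h
      rw [Equiv.apply_eq_iff_eq_symm_apply] at h
      rw [show π.symm (Fin.last n) = Fin.last n from hπinvl] at h
      have hv := congrArg Fin.val h
      have hlt := i.isLt
      simp only [Fin.coe_castSucc, Fin.val_last] at hv
      omega
    have hne' : ∀ i : Fin n, π⁻¹ i.castSucc ≠ Fin.last n := by
      intro i h
      have h2 : π (π⁻¹ i.castSucc) = π (Fin.last n) := by rw [h]
      rw [Equiv.Perm.coe_inv, Equiv.apply_symm_apply, hπl] at h2
      have hv := congrArg Fin.val h2
      have hlt := i.isLt
      simp only [Fin.coe_castSucc, Fin.val_last] at hv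
      omega
    set π' : Equiv.Perm (Fin n) :=
      { toFun := fun i => Fin.castPred (π i.castSucc) (hne i)
        invFun := fun i => Fin.castPred (π⁻¹ i.castSucc) (hne' i)
        left_inv := by
          intro i
          apply Fin.castSucc_injective
          rw [Fin.castSucc_castPred, Fin.castSucc_castPred, Equiv.Perm.coe_inv, Equiv.symm_apply_apply]
        right_inv := by
          intro i
          apply Fin.castSucc_injective
          rw [Fin.castSucc_castPred, Fin.castSucc_castPred, Equiv.Perm.coe_inv, Equiv.apply_symm_apply] } with hπ'def
    have hext : extPerm π' = π := by
      apply Equiv.ext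
      intro i
      cases i using Fin.lastCases with
      | last => rw [extPerm_last, hπl]
      | cast i =>
        rw [extPerm_castSucc]
        show (Fin.castPred (π i.castSucc) (hne i)).castSucc = π i.castSucc
        rw [Fin.castSucc_castPred]
    have hbsnoc : Fin.snoc (b ∘ Fin.castSucc) 0 = b := by
      funext j
      cases j using Fin.lastCases with
      | last => rw [Fin.snoc_last, hbl]
      | cast i => rw [Fin.snoc_castSucc]; rfl
    refine ⟨(b ∘ Fin.castSucc, π'), ?_, ?_⟩
    · rw [CompleteS, Finset.mem_filter, Simplices, Finset.mem_product,
        Fintype.mem_piFinset]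
      refine ⟨⟨fun i => by simpa using hval i.castSucc, Finset.mem_univ _⟩, ?_⟩
      intro m hm
      obtain ⟨r, hr, hrt, hrκ⟩ := hdoor' m hm
      have hrt' : r ≠ n + 1 := hrt
      refine ⟨r, by omega, ?_⟩
      show κ (Fin.snoc (vert (b ∘ Fin.castSucc, π') r) 0) = m
      rw [← vert_snoc (b ∘ Fin.castSucc) π' r (by omega), hbsnoc, hext]
      exact hrκ
    · simp only [hbsnoc, hext]

end Step

theorem kuhn_parity {k : ℕ} (hk : 0 < k) : ∀ (n : ℕ) (κ : (Fin n → ℕ) → ℕ),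
    (∀ x, κ x ≤ n) → (∀ x (j : Fin n), x j = 0 → κ x ≤ j.val) →
    (∀ x (j : Fin n), x j = k → κ x ≠ j.val) →
    (CompleteS k n κ).card % 2 = 1 := by
  intro n
  induction n with
  | zero =>
    intro κ hκ _ _
    classical
    have h1 : CompleteS k 0 κ = Simplices k 0 := by
      rw [CompleteS]
      apply Finset.filter_true_of_mem
      intro s _
      intro m hm
      have hm0 : m = 0 := by omega
      subst hm0
      refine ⟨0, by omega, ?_⟩
      have := hκ (vert s 0)
      omega
    rw [h1, Simplices, Finset.card_product, Fintype.card_piFinset]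
    simp [Finset.card_univ]
  | succ n ih =>
    intro κ hκ hS0 hS1
    set κ' : (Fin n → ℕ) → ℕ := fun y => κ (Fin.snoc y 0) with hκ'def
    have hκ'b : ∀ y, κ' y ≤ n := by
      intro y
      have := hS0 (Fin.snoc y 0) (Fin.last n) (by simp)
      simpa [Fin.val_last] using this
    have hS0' : ∀ y (j : Fin n), y j = 0 → κ' y ≤ j.val := by
      intro y j hyj
      have := hS0 (Fin.snoc y 0) j.castSucc (by rw [Fin.snoc_castSucc]; exact hyj)
      simpa [Fin.coe_castSucc] using this
    have hS1' : ∀ y (j : Fin n), y j = k → κ' y ≠ j.val := by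
      intro y j hyj
      have := hS1 (Fin.snoc y 0) j.castSucc (by rw [Fin.snoc_castSucc]; exact hyj)
      simpa [Fin.coe_castSucc] using this
    have e1 := doors_card_parity (k := k) (κ := κ) hκ
    have e2 := doors_sdiff_even (k := k) (κ := κ) hS0 hS1
    have e3 := bd_card (k := k) (κ := κ) hk hS0
    rw [← hκ'def] at e3
    have e4 := ih κ' hκ'b hS0' hS1'
    have e5 : (Doors k (n+1) κ \ BD k n κ).card + (BD k n κ).card
        = (Doors k (n+1) κ).card :=
      Finset.card_sdiff_add_card_eq_card (Finset.filter_subset _ _)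
    omega

/-- **Kuhn's combinatorial lemma** -/
theorem kuhn (n k : ℕ) (hk : 0 < k) (label : (Fin n → ℕ) → Fin n → Bool)
    (h0 : ∀ x (j : Fin n), x j = 0 → label x j = false)
    (h1 : ∀ x (j : Fin n), x j = k → label x j = true) :
    ∃ b : Fin n → ℕ, (∀ j, b j + 1 ≤ k) ∧
      ∀ j : Fin n, (∃ u, (∀ i, b i ≤ u i ∧ u i ≤ b i + 1) ∧ label u j = false) ∧
        (∃ v, (∀ i, b i ≤ v i ∧ v i ≤ b i + 1) ∧ label v j = true) := by
  classical
  have hex : ∀ x : Fin n → ℕ, ∃ m, n ≤ m ∨ ∃ j : Fin n, (j : ℕ) = m ∧ label x j = false :=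
    fun x => ⟨n, Or.inl le_rfl⟩
  set κ : (Fin n → ℕ) → ℕ := fun x => Nat.find (hex x) with hκdef
  have hκle : ∀ x, κ x ≤ n := fun x => Nat.find_min' (hex x) (Or.inl le_rfl)
  have hA : ∀ x (j : Fin n), x j = 0 → κ x ≤ j.val := by
    intro x j hxj
    exact Nat.find_min' (hex x) (Or.inr ⟨j, rfl, h0 x j hxj⟩)
  have hC : ∀ x (j : Fin n), κ x = j.val → label x j = false := by
    intro x j hxj
    have hspec := Nat.find_spec (hex x)
    rw [show Nat.find (hex x) = κ x from rfl, hxj] at hspec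
    rcases hspec with h | ⟨j', hj', hlj'⟩
    · exact absurd j.isLt (by omega)
    · have : j' = j := Fin.ext hj'
      rwa [this] at hlj'
  have hB : ∀ x (j : Fin n), x j = k → κ x ≠ j.val := by
    intro x j hxj heq
    have := hC x j heq
    rw [h1 x j hxj] at this
    simp at this
  have hD : ∀ x (j : Fin n), j.val < κ x → label x j = true := by
    intro x j hlt
    by_contra h
    have hfalse : label x j = false := by
      cases hlabel : label x j
      · rfl
      · exact absurd hlabel h
    have : κ x ≤ j.val := Nat.find_min' (hex x) (Or.inr ⟨j, rfl, hfalse⟩)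
    omega
  have hpar := kuhn_parity hk n κ hκle hA hB
  have hne : (CompleteS k n κ).Nonempty := by
    rw [← Finset.card_pos]
    omega
  obtain ⟨s, hs⟩ := hne
  rw [CompleteS, Finset.mem_filter, Simplices, Finset.mem_product,
    Fintype.mem_piFinset] at hs
  obtain ⟨⟨hval, -⟩, hcomp⟩ := hs
  refine ⟨s.1, fun j => by have := hval j; simp only [Finset.mem_range] at this; omega, ?_⟩
  intro j
  have hvert_bounds : ∀ (r : ℕ) (i : Fin n), s.1 i ≤ vert s r i ∧ vert s r i ≤ s.1 i + 1 := by
    intro r i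
    show s.1 i ≤ s.1 i + (if ((s.2)⁻¹ i).val < r then 1 else 0) ∧
      s.1 i + (if ((s.2)⁻¹ i).val < r then 1 else 0) ≤ s.1 i + 1
    split_ifs <;> omega
  constructor
  · obtain ⟨r, hr, hrκ⟩ := hcomp j.val (by have := j.isLt; omega)
    exact ⟨vert s r, fun i => hvert_bounds r i, hC _ j hrκ⟩
  · obtain ⟨r, hr, hrκ⟩ := hcomp (j.val + 1) (by have := j.isLt; omega)
    refine ⟨vert s r, fun i => hvert_bounds r i, hD _ j (by omega)⟩


/-- **Poincaré–Miranda theorem** on the unit cube. -/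
theorem miranda (n : ℕ) (f : (Fin n → ℝ) → Fin n → ℝ)
    (hf : ContinuousOn f (Set.Icc 0 1))
    (h0 : ∀ x ∈ Set.Icc (0 : Fin n → ℝ) 1, ∀ j, x j = 0 → f x j ≤ 0)
    (h1 : ∀ x ∈ Set.Icc (0 : Fin n → ℝ) 1, ∀ j, x j = 1 → 0 ≤ f x j) :
    ∃ x ∈ Set.Icc (0 : Fin n → ℝ) 1, f x = 0 := by
  classical
  set Q : Set (Fin n → ℝ) := Set.Icc 0 1 with hQ
  set φ : ℕ → (Fin n → ℕ) → (Fin n → ℝ) := fun K y i => (y i : ℝ) / (K + 1) with hφ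
  have hφmem : ∀ K (y : Fin n → ℕ), (∀ i, y i ≤ K + 1) → φ K y ∈ Q := by
    intro K y hy
    constructor
    · intro i
      show (0:ℝ) ≤ (y i : ℝ) / (K + 1)
      positivity
    · intro i
      show (y i : ℝ) / (K + 1) ≤ 1
      rw [div_le_one (by positivity)]
      exact_mod_cast hy i
  set label : ℕ → (Fin n → ℕ) → Fin n → Bool := fun K y j =>
    if y j = 0 then false else if y j = K + 1 then true
    else decide (0 ≤ f (φ K y) j) with hlabel
  have hl0 : ∀ K (y : Fin n → ℕ) j, y j = 0 → label K y j = false := by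
    intro K y j h
    simp [hlabel, h]
  have hl1 : ∀ K (y : Fin n → ℕ) j, y j = K + 1 → label K y j = true := by
    intro K y j h
    have : y j ≠ 0 := by omega
    simp [hlabel, h, this]
  have hlf : ∀ K (y : Fin n → ℕ) j, (∀ i, y i ≤ K + 1) → label K y j = false →
      f (φ K y) j ≤ 0 := by
    intro K y j hy hlab
    rw [hlabel] at hlab
    simp only at hlab
    split_ifs at hlab with c1 c2
    · apply h0 _ (hφmem K y hy)
      show (y j : ℝ) / (K+1) = 0
      rw [c1]; simp
    · rw [decide_eq_false_iff_not] at hlab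
      exact le_of_not_ge hlab
  have hlt : ∀ K (y : Fin n → ℕ) j, (∀ i, y i ≤ K + 1) → label K y j = true →
      0 ≤ f (φ K y) j := by
    intro K y j hy hlab
    rw [hlabel] at hlab
    simp only at hlab
    split_ifs at hlab with c1 c2
    · apply h1 _ (hφmem K y hy)
      show (y j : ℝ) / (K+1) = 1
      rw [c2]
      push_cast
      rw [div_self (by positivity)]
    · exact of_decide_eq_true hlab
  have H : ∀ K : ℕ, ∃ b : Fin n → ℕ, (∀ j, b j + 1 ≤ K + 1) ∧
      ∀ j : Fin n, (∃ u, (∀ i, b i ≤ u i ∧ u i ≤ b i + 1) ∧ label K u j = false) ∧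
        (∃ v, (∀ i, b i ≤ v i ∧ v i ≤ b i + 1) ∧ label K v j = true) :=
    fun K => kuhn n (K+1) (Nat.succ_pos K) (label K) (hl0 K) (hl1 K)
  choose b hbb hflip using H
  set c : ℕ → (Fin n → ℝ) := fun K => φ K (b K) with hc
  have hcmem : ∀ K, c K ∈ Q := fun K => hφmem K (b K) (fun i => by have := hbb K i; omega)
  obtain ⟨x, hxQ, ψ, hψ, htends⟩ :=
    (isCompact_Icc (a := (0 : Fin n → ℝ)) (b := 1)).tendsto_subseq hcmem
  refine ⟨x, hxQ, ?_⟩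
  have hdist : ∀ (w : ℕ → Fin n → ℕ), (∀ K, ∀ i, b K i ≤ w K i ∧ w K i ≤ b K i + 1) →
      ∀ K, dist (φ K (w K)) (c K) ≤ 1 / (K + 1) := by
    intro w hw K
    rw [dist_pi_le_iff (by positivity)]
    intro i
    have h1' := (hw K i).1
    have h2' := (hw K i).2
    rw [Real.dist_eq]
    rw [show (φ K (w K) i) - (c K i) = ((w K i : ℝ) - (b K i : ℝ)) / (K+1) by
      rw [hc]; show (w K i : ℝ)/(K+1) - (b K i : ℝ)/(K+1) = _; ring]
    rw [abs_div, abs_of_nonneg (by positivity : (0:ℝ) ≤ (K:ℝ)+1)]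
    apply div_le_div_of_nonneg_right ?_ (by positivity)
    have hc1 : ((b K i : ℝ)) ≤ w K i := by exact_mod_cast h1'
    have hc2 : ((w K i : ℝ)) ≤ (b K i : ℝ) + 1 := by exact_mod_cast h2'
    rw [abs_le]
    constructor <;> linarith
  have hψlim : Tendsto (fun m => (1:ℝ) / (ψ m + 1)) atTop (𝓝 0) :=
    tendsto_one_div_add_atTop_nhds_zero_nat.comp hψ.tendsto_atTop
  have hlim : ∀ (w : ℕ → Fin n → ℕ), (∀ K, ∀ i, b K i ≤ w K i ∧ w K i ≤ b K i + 1) →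
      Tendsto (fun m => φ (ψ m) (w (ψ m))) atTop (𝓝 x) := by
    intro w hw
    rw [tendsto_iff_dist_tendsto_zero]
    apply squeeze_zero (fun m => dist_nonneg)
      (g := fun m => 1/(ψ m + 1) + dist (c (ψ m)) x)
    · intro m
      calc dist (φ (ψ m) (w (ψ m))) x
          ≤ dist (φ (ψ m) (w (ψ m))) (c (ψ m)) + dist (c (ψ m)) x := dist_triangle _ _ _
        _ ≤ 1/(ψ m + 1) + dist (c (ψ m)) x :=
            add_le_add_left (hdist w hw (ψ m)) _
    · have h2 := tendsto_iff_dist_tendsto_zero.mp htends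
      simpa using hψlim.add h2
  funext j
  have h1j := fun K => (hflip K j).1
  have h2j := fun K => (hflip K j).2
  choose u hub huf using h1j
  choose v hvb hvt using h2j
  have hubd : ∀ K, ∀ i, u K i ≤ K + 1 := fun K i => by
    have := (hub K i).2; have := hbb K i; omega
  have hvbd : ∀ K, ∀ i, v K i ≤ K + 1 := fun K i => by
    have := (hvb K i).2; have := hbb K i; omega
  have hfu : ∀ K, f (φ K (u K)) j ≤ 0 := fun K => hlf K (u K) j (hubd K) (huf K)
  have hfv : ∀ K, 0 ≤ f (φ K (v K)) j := fun K => hlt K (v K) j (hvbd K) (hvt K)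
  have key : ∀ (w : ℕ → Fin n → ℕ), (∀ K, ∀ i, b K i ≤ w K i ∧ w K i ≤ b K i + 1) →
      (∀ K, ∀ i, w K i ≤ K + 1) →
      Tendsto (fun m => f (φ (ψ m) (w (ψ m))) j) atTop (𝓝 (f x j)) := by
    intro w hw hwd
    have hmem : ∀ m, φ (ψ m) (w (ψ m)) ∈ Q := fun m => hφmem _ _ (hwd _)
    have h1' : Tendsto (fun m => φ (ψ m) (w (ψ m))) atTop (𝓝[Q] x) :=
      tendsto_nhdsWithin_iff.mpr ⟨hlim w hw, Eventually.of_forall hmem⟩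
    have h2' : Tendsto (fun m => f (φ (ψ m) (w (ψ m)))) atTop (𝓝 (f x)) :=
      (hf x hxQ).tendsto.comp h1'
    exact ((continuous_apply j).tendsto _).comp h2'
  have hle : f x j ≤ 0 :=
    le_of_tendsto (key u hub hubd) (Eventually.of_forall (fun m => hfu (ψ m)))
  have hge : 0 ≤ f x j :=
    ge_of_tendsto (key v hvb hvbd) (Eventually.of_forall (fun m => hfv (ψ m)))
  have : f x j = 0 := le_antisymm hle hge
  simpa using this

end KuhnCL

open Finset Set Filter Topology Metric MeasureTheory in
/-- **Lebesgue's covering theorem.**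
If the unit cube `[0,1]^n` is covered by closed sets with covering multiplicity
at most `n`, then one of the sets intersects two opposite facets of the cube. -/
theorem stmt7 (n N : ℕ) (X : Fin N → Set (Fin n → ℝ))
    (hclosed : ∀ i, IsClosed (X i))
    (hcover : Set.Icc (0 : Fin n → ℝ) 1 ⊆ ⋃ i, X i)
    (hmult : ∀ x ∈ Set.Icc (0 : Fin n → ℝ) 1, Set.ncard {i | x ∈ X i} ≤ n) :
    ∃ (i : Fin N) (j : Fin n),
      (∃ x ∈ X i ∩ Set.Icc (0 : Fin n → ℝ) 1, x j = 0) ∧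
      (∃ x ∈ X i ∩ Set.Icc (0 : Fin n → ℝ) 1, x j = 1) := by
  classical
  by_contra hcon
  push_neg at hcon
  set Q : Set (Fin n → ℝ) := Set.Icc 0 1 with hQdef
  have hQcl : IsClosed Q := isClosed_Icc
  have hQc : IsCompact Q := isCompact_Icc
  have hQ0 : (0 : Fin n → ℝ) ∈ Q := Set.left_mem_Icc.mpr (fun i => by norm_num)
  -- the case n = 0 is impossible
  rcases Nat.eq_zero_or_pos n with hn | hn
  · obtain ⟨_, ⟨i, rfl⟩, hXi⟩ := hcover hQ0
    have h1' : ({i' | (0 : Fin n → ℝ) ∈ X i'}).Nonempty := ⟨i, hXi⟩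
    have h2' : ({i' | (0 : Fin n → ℝ) ∈ X i'}).Finite := Set.toFinite _
    have := (Set.ncard_pos h2').mpr h1'
    have := hmult 0 hQ0
    omega
  -- compact pieces
  set Y : Fin N → Set (Fin n → ℝ) := fun i => X i ∩ Q with hYdef
  have hYc : ∀ i, IsCompact (Y i) := fun i => hQc.inter_left (hclosed i)
  have hYcl : ∀ i, IsClosed (Y i) := fun i => (hclosed i).inter hQcl
  -- choice of missed facet
  have hmiss : ∀ i j, ∃ s : Bool, ∀ x ∈ Y i, x j ≠ (if s then (1:ℝ) else 0) := by
    intro i j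
    by_cases hA : ∃ x ∈ X i ∩ Q, x j = 0
    · refine ⟨true, ?_⟩
      intro x hx
      simpa using hcon i j hA x hx
    · refine ⟨false, ?_⟩
      push_neg at hA
      intro x hx
      simpa using hA x hx
  choose sgn hsgn using hmiss
  -- ε1 : neighborhoods avoid the missed facet
  have hε1 : ∀ i j, ∃ ε > 0, ∀ x ∈ Q, x j = (if sgn i j then (1:ℝ) else 0) →
      ε ≤ infDist x (Y i) ∨ Y i = ∅ := by
    intro i j
    by_cases hYe : Y i = ∅
    · exact ⟨1, one_pos, fun x _ _ => Or.inr hYe⟩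
    · have hYne : (Y i).Nonempty := Set.nonempty_iff_ne_empty.mpr hYe
      set F : Set (Fin n → ℝ) := {x ∈ Q | x j = (if sgn i j then (1:ℝ) else 0)} with hF
      by_cases hFe : F = ∅
      · refine ⟨1, one_pos, fun x hx hxj => ?_⟩
        exact absurd (show x ∈ F from ⟨hx, hxj⟩) (by rw [hFe]; exact notMem_empty x)
      · have hFne : F.Nonempty := Set.nonempty_iff_ne_empty.mpr hFe
        have hFcl : IsClosed F := by
          apply IsClosed.inter hQcl
          exact isClosed_eq (continuous_apply j) continuous_const
        have hFc : IsCompact F := hQc.of_isClosed_subset hFcl (fun x hx => hx.1)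
        obtain ⟨x0, hx0F, hx0min⟩ := hFc.exists_isMinOn hFne
          (Metric.continuous_infDist_pt (Y i)).continuousOn
        have hx0pos : 0 < infDist x0 (Y i) := by
          rw [← (hYcl i).notMem_iff_infDist_pos hYne]
          intro hx0Y
          exact hsgn i j x0 hx0Y hx0F.2
        refine ⟨infDist x0 (Y i), hx0pos, fun x hx hxj => Or.inl ?_⟩
        exact hx0min (show x ∈ F from ⟨hx, hxj⟩)
  choose εb hεbpos hεb using hε1
  -- ε2 : multiplicity bound for neighborhoods
  have hε2 : ∀ S : Finset (Fin N), ∃ ε > 0, S.card = n + 1 →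
      ∀ x ∈ Q, ∃ i ∈ S, Y i = ∅ ∨ ε ≤ infDist x (Y i) := by
    intro S
    by_cases hScard : S.card = n + 1
    · by_cases hSe : ∃ i ∈ S, Y i = ∅
      · obtain ⟨i, hiS, hie⟩ := hSe
        exact ⟨1, one_pos, fun _ x _ => ⟨i, hiS, Or.inl hie⟩⟩
      · push_neg at hSe
        have hSne : ∀ i ∈ S, (Y i).Nonempty := hSe
        set g : (Fin n → ℝ) → ℝ := fun x => ∑ i ∈ S, infDist x (Y i) with hg
        have hgc : Continuous g := continuous_finset_sum _
          (fun i _ => Metric.continuous_infDist_pt (Y i))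
        have hgpos : ∀ x ∈ Q, 0 < g x := by
          intro x hx
          have hnotall : ∃ i ∈ S, x ∉ Y i := by
            by_contra hall
            push_neg at hall
            have hsub : ↑S ⊆ {i | x ∈ X i} := fun i hi => (hall i hi).1
            have h1' := Set.ncard_le_ncard hsub (Set.toFinite _)
            rw [Set.ncard_coe_finset, hScard] at h1'
            have := hmult x hx
            omega
          obtain ⟨i0, hi0S, hi0⟩ := hnotall
          apply Finset.sum_pos' (fun i _ => Metric.infDist_nonneg)
          refine ⟨i0, hi0S, ?_⟩
          rw [← (hYcl i0).notMem_iff_infDist_pos (hSne i0 hi0S)]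
          exact hi0
        obtain ⟨x1, hx1Q, hx1min⟩ := hQc.exists_isMinOn ⟨0, hQ0⟩ hgc.continuousOn
        have hc : 0 < g x1 := hgpos x1 hx1Q
        refine ⟨g x1 / (n+1), by positivity, fun _ x hx => ?_⟩
        by_contra hallc
        push_neg at hallc
        have hlt : ∀ i ∈ S, infDist x (Y i) < g x1 / (n+1) := by
          intro i hi
          rcases hallc i hi with ⟨h1', h2'⟩
          exact h2'
        have : g x < g x1 := by
          calc g x < ∑ _i ∈ S, g x1 / (n+1) :=
                Finset.sum_lt_sum_of_nonempty (Finset.card_pos.mp (by omega)) hlt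
            _ = g x1 := by
              rw [Finset.sum_const, hScard, nsmul_eq_mul]
              push_cast
              field_simp
        exact absurd (hx1min hx) (by simpa using this)
    · exact ⟨1, one_pos, fun h => absurd h hScard⟩
  choose ε2f hε2pos hε2p using hε2
  -- global ε
  have hNEfinset : (Finset.univ : Finset (Finset (Fin N))).Nonempty := ⟨∅, Finset.mem_univ _⟩
  -- N = 0 impossible
  rcases Nat.eq_zero_or_pos N with hN | hN
  · obtain ⟨_, ⟨i, rfl⟩, _⟩ := hcover hQ0
    exact absurd i.isLt (by omega)
  have hNEprod : ((Finset.univ ×ˢ Finset.univ : Finset (Fin N × Fin n))).Nonempty :=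
    ⟨(⟨0, hN⟩, ⟨0, hn⟩), by simp⟩
  set εS : ℝ := (Finset.univ : Finset (Finset (Fin N))).inf' hNEfinset ε2f with hεSdef
  set εB : ℝ := (Finset.univ ×ˢ Finset.univ : Finset (Fin N × Fin n)).inf' hNEprod
    (fun p => εb p.1 p.2) with hεBdef
  set ε : ℝ := min εS εB with hεdef
  have hεpos : 0 < ε := by
    rw [hεdef, lt_min_iff]
    constructor
    · rw [hεSdef, Finset.lt_inf'_iff]
      intro S _
      exact hε2pos S
    · rw [hεBdef, Finset.lt_inf'_iff]
      intro p _
      exact hεbpos p.1 p.2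
  have hεb' : ∀ i j, ∀ x ∈ Q, x j = (if sgn i j then (1:ℝ) else 0) →
      ε ≤ infDist x (Y i) ∨ Y i = ∅ := by
    intro i j x hx hxj
    rcases hεb i j x hx hxj with h | h
    · left
      calc ε ≤ εB := min_le_right _ _
        _ ≤ εb i j := Finset.inf'_le (fun p => εb p.1 p.2) (by simp : (i, j) ∈ _)
        _ ≤ _ := h
    · exact Or.inr h
  have hmultε : ∀ x ∈ Q,
      ((Finset.univ : Finset (Fin N)).filter
        (fun i => (Y i).Nonempty ∧ infDist x (Y i) < ε)).card ≤ n := by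
    intro x hx
    by_contra hlarge
    push_neg at hlarge
    obtain ⟨T, hTsub, hTcard⟩ := Finset.exists_subset_card_eq
      (show n + 1 ≤ _ from hlarge)
    obtain ⟨i, hiT, hor⟩ := hε2p T hTcard x hx
    have hifil := hTsub hiT
    rw [Finset.mem_filter] at hifil
    obtain ⟨-, hne, hlt⟩ := hifil
    rcases hor with h | h
    · rw [h] at hne
      exact absurd hne (by simp)
    · have : ε ≤ infDist x (Y i) :=
        le_trans (min_le_left _ _)
          (le_trans (Finset.inf'_le ε2f (Finset.mem_univ T)) h)
      linarith
  -- partition of unity pieces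
  set φf : Fin N → (Fin n → ℝ) → ℝ := fun i x =>
    if (Y i).Nonempty then max (ε - infDist x (Y i)) 0 else 0 with hφfdef
  have hφfc : ∀ i, Continuous (φf i) := by
    intro i
    by_cases h : (Y i).Nonempty
    · simp only [hφfdef, if_pos h]
      exact (continuous_const.sub (Metric.continuous_infDist_pt _)).max continuous_const
    · simp only [hφfdef, if_neg h]
      exact continuous_const
  have hφfnn : ∀ i x, 0 ≤ φf i x := by
    intro i x
    rw [hφfdef]
    simp only
    split_ifs
    · exact le_max_right _ _
    · exact le_refl 0
  have hφfpos : ∀ i x, 0 < φf i x → (Y i).Nonempty ∧ infDist x (Y i) < ε := by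
    intro i x h
    rw [hφfdef] at h
    simp only at h
    split_ifs at h with hne
    · refine ⟨hne, ?_⟩
      by_contra hge
      push_neg at hge
      rw [max_eq_right (by linarith)] at h
      exact lt_irrefl 0 h
    · exact absurd h (lt_irrefl 0)
  have hcov : ∀ x ∈ Q, ∃ i, φf i x = ε := by
    intro x hx
    obtain ⟨_, ⟨i, rfl⟩, hXi⟩ := hcover hx
    refine ⟨i, ?_⟩
    have hxY : x ∈ Y i := ⟨hXi, hx⟩
    have hne : (Y i).Nonempty := ⟨x, hxY⟩
    show (if (Y i).Nonempty then max (ε - infDist x (Y i)) 0 else 0) = ε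
    rw [if_pos hne, Metric.infDist_zero_of_mem hxY, sub_zero]
    exact max_eq_left (le_of_lt hεpos)
  set Sf : (Fin n → ℝ) → ℝ := fun x => ∑ i, φf i x with hSfdef
  have hSfc : Continuous Sf := continuous_finset_sum _ (fun i _ => hφfc i)
  have hSfpos : ∀ x ∈ Q, 0 < Sf x := by
    intro x hx
    obtain ⟨i0, hi0⟩ := hcov x hx
    exact Finset.sum_pos' (fun i _ => hφfnn i x)
      ⟨i0, Finset.mem_univ _, by rw [hi0]; exact hεpos⟩
  set V : Fin N → (Fin n → ℝ) := fun i j => if sgn i j then 0 else 1 with hVdef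
  have havoid : ∀ x ∈ Q, ∀ i j, 0 < φf i x →
      x j ≠ (if sgn i j then (1:ℝ) else 0) := by
    intro x hx i j hpos hxj
    obtain ⟨hne, hlt⟩ := hφfpos i x hpos
    rcases hεb' i j x hx hxj with h | h
    · linarith
    · rw [h] at hne
      exact absurd hne (by simp)
  set F : (Fin n → ℝ) → (Fin n → ℝ) := fun x j => (∑ i, φf i x * V i j) / Sf x
    with hFdef
  have hFc : ContinuousOn F Q := by
    rw [continuousOn_pi]
    intro j
    exact ContinuousOn.div
      (continuous_finset_sum _ (fun i _ => (hφfc i).mul continuous_const)).continuousOn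
      hSfc.continuousOn (fun x hx => ne_of_gt (hSfpos x hx))
  have hF0 : ∀ x ∈ Q, ∀ j, x j = 0 → F x j = 0 := by
    intro x hx j hxj
    rw [hFdef]
    simp only
    rw [Finset.sum_eq_zero, zero_div]
    intro i _
    rcases eq_or_lt_of_le (hφfnn i x) with h | h
    · rw [← h, zero_mul]
    · have hsgnt : sgn i j = true := by
        by_contra hf
        have hf' : sgn i j = false := by
          cases hsgn' : sgn i j
          · rfl
          · exact absurd hsgn' hf
        apply havoid x hx i j h
        rw [hf', if_neg (by simp)]
        exact hxj
      rw [hVdef]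
      simp only [hsgnt, if_pos]
      rw [mul_zero]
  have hF1 : ∀ x ∈ Q, ∀ j, x j = 1 → F x j = 1 := by
    intro x hx j hxj
    rw [hFdef]
    simp only
    have hterm : ∀ i ∈ Finset.univ, φf i x * V i j = φf i x := by
      intro i _
      rcases eq_or_lt_of_le (hφfnn i x) with h | h
      · rw [← h, zero_mul]
      · have hsgnf : sgn i j = false := by
          by_contra hf
          have hf' : sgn i j = true := by
            cases hsgn' : sgn i j
            · exact absurd hsgn' hf
            · rfl
          apply havoid x hx i j h
          rw [hf', if_pos rfl]
          exact hxj
        rw [hVdef]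
        simp only [hsgnf]
        rw [if_neg (by simp), mul_one]
    rw [Finset.sum_congr rfl hterm]
    exact div_self (ne_of_gt (hSfpos x hx))
  -- support is small : F x lies in span of few vertices
  have hsupp : ∀ x ∈ Q, ∃ S : Finset (Fin N), S.Nonempty ∧ S.card ≤ n ∧
      F x ∈ affineSpan ℝ (V '' ↑S) := by
    intro x hx
    set S := (Finset.univ : Finset (Fin N)).filter (fun i => 0 < φf i x) with hSdef
    have hSsub : S ⊆ (Finset.univ : Finset (Fin N)).filter
        (fun i => (Y i).Nonempty ∧ infDist x (Y i) < ε) := by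
      intro i hi
      rw [hSdef, Finset.mem_filter] at hi
      rw [Finset.mem_filter]
      exact ⟨Finset.mem_univ _, hφfpos i x hi.2⟩
    have hScard : S.card ≤ n := le_trans (Finset.card_le_card hSsub) (hmultε x hx)
    obtain ⟨i0, hi0⟩ := hcov x hx
    have hi0S : i0 ∈ S := by
      rw [hSdef, Finset.mem_filter]
      exact ⟨Finset.mem_univ _, by rw [hi0]; exact hεpos⟩
    have hsumS : ∑ i ∈ S, φf i x = Sf x := by
      rw [hSfdef]
      simp only
      apply Finset.sum_subset (Finset.subset_univ S)
      intro i _ hiS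
      rcases eq_or_lt_of_le (hφfnn i x) with h | h
      · exact h.symm
      · exact absurd (by rw [hSdef, Finset.mem_filter]; exact ⟨Finset.mem_univ _, h⟩) hiS
    set w : Fin N → ℝ := fun i => φf i x / Sf x with hwdef
    have hwsum : ∑ i ∈ S.attach, w i.1 = 1 := by
      rw [Finset.sum_attach S (fun i => w i)]
      rw [hwdef]
      simp only
      rw [← Finset.sum_div, hsumS, div_self (ne_of_gt (hSfpos x hx))]
    have hcomb : F x = (S.attach.affineCombination ℝ (fun i => V i.1)) (fun i => w i.1) := by
      rw [Finset.affineCombination_eq_linear_combination _ _ _ hwsum]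
      funext j
      rw [Finset.sum_apply]
      have : ∀ i ∈ S.attach, (w i.1 • V i.1) j = (φf i.1 x * V i.1 j) / Sf x := by
        intro i _
        show w i.1 * V i.1 j = _
        rw [hwdef]
        ring
      rw [Finset.sum_congr rfl this]
      rw [Finset.sum_attach S (fun i => (φf i x * V i j) / Sf x)]
      rw [← Finset.sum_div]
      rw [hFdef]
      simp only
      congr 1
      symm
      apply Finset.sum_subset (Finset.subset_univ S)
      intro i _ hiS
      rcases eq_or_lt_of_le (hφfnn i x) with h | h
      · rw [← h, zero_mul]
      · exact absurd (by rw [hSdef, Finset.mem_filter]; exact ⟨Finset.mem_univ _, h⟩) hiS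
    refine ⟨S, ⟨i0, hi0S⟩, hScard, ?_⟩
    rw [hcomb]
    have hmem := affineCombination_mem_affineSpan hwsum (fun i : {y // y ∈ S} => V i.1)
    rwa [show Set.range (fun i : {y // y ∈ S} => V i.1) = V '' ↑S from
      (Set.image_eq_range V ↑S).symm] at hmem
  -- the union of spans is null
  set B : Set (Fin n → ℝ) := ⋃ S ∈ {T : Finset (Fin N) | T.Nonempty ∧ T.card ≤ n},
    (affineSpan ℝ (V '' ↑S) : Set (Fin n → ℝ)) with hBdef
  have hBnull : volume B = 0 := by
    rw [hBdef, measure_biUnion_null_iff (Set.to_countable _)]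
    intro S hS
    apply MeasureTheory.Measure.addHaar_affineSubspace
    intro htop
    have hvs : vectorSpan ℝ (V '' ↑S) = ⊤ := by
      rw [← direction_affineSpan, htop, AffineSubspace.direction_top]
    obtain ⟨m, hm⟩ : ∃ m, S.card = m + 1 :=
      ⟨S.card - 1, by have := Finset.card_pos.mpr hS.1; omega⟩
    have hrank := finrank_vectorSpan_range_le ℝ
      (fun i : ↥(↑S : Set (Fin N)) => V i) (n := m) (by
        rw [show Fintype.card ↥(↑S : Set (Fin N)) = S.card from Fintype.card_coe S]
        exact hm)
    rw [← Set.image_eq_range V (↑S : Set (Fin N))] at hrank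
    rw [hvs, finrank_top, Module.finrank_fintype_fun_eq_card, Fintype.card_fin] at hrank
    have := hS.2
    omega
  have hQvol : volume Q = 1 := by
    rw [hQdef, Real.volume_Icc_pi]
    simp
  have hexp : ∃ p ∈ Q, p ∉ B := by
    by_contra h
    push_neg at h
    have hsub : Q ⊆ B := h
    have : volume Q ≤ volume B := measure_mono hsub
    rw [hQvol, hBnull] at this
    simp at this
  obtain ⟨p, hpQ, hpB⟩ := hexp
  -- Miranda
  obtain ⟨x0, hx0Q, hx0⟩ := KuhnCL.miranda n (fun x j => F x j - p j)
    (by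
      rw [continuousOn_pi]
      intro j
      exact ((continuousOn_pi.mp hFc) j).sub continuousOn_const)
    (by
      intro x hx j hxj
      show F x j - p j ≤ 0
      rw [hF0 x hx j hxj]
      have := hpQ.1 j
      simp only [Pi.zero_apply] at this
      linarith)
    (by
      intro x hx j hxj
      show 0 ≤ F x j - p j
      rw [hF1 x hx j hxj]
      have := hpQ.2 j
      simp only [Pi.one_apply] at this
      linarith)
  have hFp : F x0 = p := by
    funext j
    have := congrFun hx0 j
    simp only [Pi.zero_apply] at this
    linarith [this]
  obtain ⟨S, hS1, hS2, hS3⟩ := hsupp x0 hx0Q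
  apply hpB
  rw [hBdef]
  exact Set.mem_biUnion (⟨hS1, hS2⟩ : S ∈ {T : Finset (Fin N) | T.Nonempty ∧ T.card ≤ n})
    (hFp ▸ hS3)
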